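/- (Gate teleportation identity.) Let U : Matrix (Fin 2) (Fin 2) ℂ be unitary, let X := !![0,1;1,0] and Z := !![1,0;0,−1] be the Pauli matrices, let Φ₀₀ : Fin 2 × Fin 2 → ℂ be the EPR state Φ₀₀ (i,j) = (if i = j then (1 : ℂ)/Real.sqrt 2 else 0), and for a b : Fin 2 define the U-rotated Bell state Φ(U)_{ab} := (Uᴴ * Z^(b.val) * X^(a.val) ⊗ 1) applied to Φ₀₀ (a vector in ℂ^2 ⊗ ℂ^2, i.e., a function Fin 2 × Fin 2 → ℂ, with ⊗ the Kronecker product). Then for every α : Fin 2 → ℂ, the three-qubit state α ⊗ Φ₀₀ (as a function on Fin 2 × (Fin 2 × Fin 2)) equals (1/2) * ∑_{a b : Fin 2} Φ(U)_{ab} ⊗ (X^(a.val) * Z^(b.val) * U applied to α), where the first two tensor factors carry Φ(U)_{ab} and the last carries X^a Z^b U α. -/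

import Mathlib

open Matrix Kronecker

noncomputable def pauliX : Matrix (Fin 2) (Fin 2) ℂ := !![0, 1; 1, 0]

noncomputable def pauliZ : Matrix (Fin 2) (Fin 2) ℂ := !![1, 0; 0, -1]

/-- The EPR state `(|00⟩ + |11⟩)/√2`. -/
noncomputable def eprState : Fin 2 × Fin 2 → ℂ :=
  fun p => if p.1 = p.2 then (1 : ℂ) / Real.sqrt 2 else 0

/-- The `U`-rotated Bell state `Φ(U)_{ab} = (Uᴴ Z^b X^a ⊗ I) Φ₀₀`. -/
noncomputable def rotatedBell (U : Matrix (Fin 2) (Fin 2) ℂ) (a b : Fin 2) :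
    Fin 2 × Fin 2 → ℂ :=
  ((Uᴴ * pauliZ ^ b.val * pauliX ^ a.val) ⊗ₖ (1 : Matrix (Fin 2) (Fin 2) ℂ)).mulVec
    eprState

set_option maxHeartbeats 1000000 in

lemma hrb (U : Matrix (Fin 2) (Fin 2) ℂ) (a b i j : Fin 2) :
    rotatedBell U a b (i, j)
      = (Uᴴ * pauliZ ^ b.val * pauliX ^ a.val) i j * (1 / Real.sqrt 2) := by
  simp only [rotatedBell, Matrix.mulVec, dotProduct, Fintype.sum_prod_type,
    Matrix.kroneckerMap_apply, eprState, Matrix.one_apply, Fin.sum_univ_two]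
  fin_cases j <;> simp

section prods
variable (U : Matrix (Fin 2) (Fin 2) ℂ)

lemma hA0 : Uᴴ = !![star (U 0 0), star (U 1 0); star (U 0 1), star (U 1 1)] := by
  ext i j; fin_cases i <;> fin_cases j <;> simp [Matrix.conjTranspose_apply]

lemma mulX (a b c d : ℂ) : !![a,b;c,d] * pauliX = !![b,a;d,c] := by
  ext i j; fin_cases i <;> fin_cases j <;>
    simp [pauliX, Matrix.mul_apply, Fin.sum_univ_two]

lemma mulZ (a b c d : ℂ) : !![a,b;c,d] * pauliZ = !![a,-b;c,-d] := by
  ext i j; fin_cases i <;> fin_cases j <;>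
    simp [pauliZ, Matrix.mul_apply, Fin.sum_univ_two]

lemma hXU : pauliX * U = !![U 1 0, U 1 1; U 0 0, U 0 1] := by
  ext i j; fin_cases i <;> fin_cases j <;>
    simp [pauliX, Matrix.mul_apply, Fin.sum_univ_two]

lemma hZU : pauliZ * U = !![U 0 0, U 0 1; -U 1 0, -U 1 1] := by
  ext i j; fin_cases i <;> fin_cases j <;>
    simp [pauliZ, Matrix.mul_apply, Fin.sum_univ_two]

lemma hXZU : pauliX * pauliZ * U = !![-U 1 0, -U 1 1; U 0 0, U 0 1] := by
  rw [Matrix.mul_assoc, hZU]; ext i j; fin_cases i <;> fin_cases j <;>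
    simp [pauliX, Matrix.mul_apply, Fin.sum_univ_two]

end prods


set_option maxHeartbeats 1000000 in
theorem gate_teleportation (U : Matrix (Fin 2) (Fin 2) ℂ) (hU : Uᴴ * U = 1)
    (α : Fin 2 → ℂ) :
    (fun p : Fin 2 × Fin 2 × Fin 2 => α p.1 * eprState p.2)
      = (1 / 2 : ℂ) • ∑ a : Fin 2, ∑ b : Fin 2,
          (fun p : Fin 2 × Fin 2 × Fin 2 =>
            rotatedBell U a b (p.1, p.2.1) *
              ((pauliX ^ a.val * pauliZ ^ b.val * U).mulVec α) p.2.2) := by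

  have hs : ((Real.sqrt 2 : ℝ) : ℂ) ≠ 0 := by norm_cast; positivity
  have h2 : ((Real.sqrt 2 : ℝ) : ℂ) * ((Real.sqrt 2 : ℝ) : ℂ) = 2 := by
    rw [← Complex.ofReal_mul, Real.mul_self_sqrt (by norm_num)]; norm_num
  have key := fun (i j : Fin 2) => congrFun (congrFun hU i) j
  simp only [Matrix.mul_apply, Matrix.conjTranspose_apply, Fin.sum_univ_two,
    Matrix.one_apply] at key
  have k00 := key 0 0; have k01 := key 0 1; have k10 := key 1 0; have k11 := key 1 1
  norm_num at k00 k01 k10 k11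
  funext ⟨i, j, k⟩
  simp only [Pi.smul_apply, Finset.sum_apply, Fin.sum_univ_two, smul_eq_mul, hrb,
    Fin.val_zero, Fin.val_one, pow_zero, pow_one, Matrix.mul_one, Matrix.one_mul,
    hA0 U, mulX, mulZ, hXU U, hZU U, hXZU U, Matrix.mulVec, dotProduct,
    eprState]
  set_option maxHeartbeats 1000000 in
  fin_cases i <;> fin_cases j <;> fin_cases k <;>
    · simp only [Matrix.cons_val_zero, Matrix.cons_val_one, Matrix.head_cons,
        Matrix.head_fin_const, Fin.isValue]
      norm_num
      field_simp
      first
      | ring1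
      | linear_combination -(2*((Real.sqrt 2 : ℝ) : ℂ)*α 0) * k00 - (2*((Real.sqrt 2 : ℝ) : ℂ)*α 1) * k01
      | linear_combination -(2*((Real.sqrt 2 : ℝ) : ℂ)*α 0) * k10 - (2*((Real.sqrt 2 : ℝ) : ℂ)*α 1) * k11
      | linear_combination (2*((Real.sqrt 2 : ℝ) : ℂ)*α 0) * k10 - (2*α 0) * k00 + (2*((Real.sqrt 2 : ℝ) : ℂ)*α 1) * k11 - (2*α 1) * k01
      | linear_combination (2*((Real.sqrt 2 : ℝ) : ℂ)*α 1 - 2*α 1) * k11 + (2*((Real.sqrt 2 : ℝ) : ℂ)*α 0 - 2*α 0) * k10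
      | linear_combination -(2*α 0) * k00 - (2*α 1) * k01
      | linear_combination -(2*α 1) * k11 - (2*α 0) * k10
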